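/- If Q is a regular Dirichlet form on ℓ²(V,m) where V is a countable set and m a measure of full support, then every finitely supported function on V belongs to the domain of Q. -/
import Mathlib


open scoped ENNReal

/-- If `Q` is a regular Dirichlet form on `ℓ²(V,m)` (V countable, m of full
support), then every finitely supported function belongs to the domain of `Q`
(the domain being `{u | Q u ≠ ∞}`, where `Q` takes the value `∞` off its domain). -/
theorem finitely_supported_mem_domain_of_regular_dirichlet_form
    (V : Type*) [Countable V] (m : V → ℝ) (hm : ∀ x, 0 < m x)
    (Q : (V → ℝ) → ℝ≥0∞)
    -- the domain is contained in ℓ²(V,m)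
    (hdom : ∀ u, Q u ≠ ⊤ → Summable (fun x => m x * (u x) ^ 2))
    -- the domain is a subspace
    (hadd : ∀ u v, Q u ≠ ⊤ → Q v ≠ ⊤ → Q (u + v) ≠ ⊤)
    (hsmul : ∀ (a : ℝ) (u : V → ℝ), Q u ≠ ⊤ → Q (a • u) ≠ ⊤)
    -- Dirichlet property: normal contractions do not increase the form
    (hmarkov : ∀ C : ℝ → ℝ, C 0 = 0 → (∀ s t, |C s - C t| ≤ |s - t|) →
      ∀ u : V → ℝ, Q (fun x => C (u x)) ≤ Q u)
    -- closedness: lower semicontinuity with respect to ℓ²-convergence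
    (hclosed : ∀ (u : V → ℝ) (un : ℕ → V → ℝ),
      (∀ n, Summable fun x => m x * (un n x - u x) ^ 2) →
      Filter.Tendsto (fun n => ∑' x, m x * (un n x - u x) ^ 2) Filter.atTop (nhds 0) →
      Q u ≤ Filter.liminf (fun n => Q (un n)) Filter.atTop)
    -- regularity, part 1: D(Q) ∩ C_c(V) is dense in C_c(V) w.r.t. the supremum norm
    (hreg₁ : ∀ φ : V → ℝ, (Function.support φ).Finite → ∀ ε > (0:ℝ),
      ∃ ψ : V → ℝ, (Function.support ψ).Finite ∧ Q ψ ≠ ⊤ ∧ ∀ x, |ψ x - φ x| < ε)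
    -- regularity, part 2: D(Q) ∩ C_c(V) is dense in D(Q) w.r.t. the form norm
    (hreg₂ : ∀ u : V → ℝ, Q u ≠ ⊤ → ∀ ε > (0:ℝ),
      ∃ ψ : V → ℝ, (Function.support ψ).Finite ∧ Q ψ ≠ ⊤ ∧
        Summable (fun x => m x * (ψ x - u x) ^ 2) ∧
        (∑' x, m x * (ψ x - u x) ^ 2) < ε ∧ Q (fun x => ψ x - u x) < ENNReal.ofReal ε) :
    ∀ φ : V → ℝ, (Function.support φ).Finite → Q φ ≠ ⊤ := by
  classical
  -- Step 0: the zero function is in the domain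
  have hQ0 : Q 0 ≠ ⊤ := by
    obtain ⟨ψ, -, hψQ, -⟩ := hreg₁ 0 (by simp) 1 one_pos
    have h := hmarkov (fun _ => (0:ℝ)) rfl (fun s t => by simp [abs_nonneg]) ψ
    have h0 : Q 0 ≤ Q ψ := h
    exact fun htop => hψQ (top_le_iff.mp (htop ▸ h0))
  -- Step 1: each indicator function is in the domain
  have hind : ∀ x : V, Q (fun y => if y = x then (1:ℝ) else 0) ≠ ⊤ := by
    intro x
    have hsupp : (Function.support fun y => if y = x then (1:ℝ) else 0).Finite := by
      apply Set.Finite.subset (Set.finite_singleton x)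
      intro y hy
      by_contra hyx
      simp only [Set.mem_singleton_iff] at hyx
      simp only [Function.mem_support, if_neg hyx] at hy
      exact hy rfl
    obtain ⟨ψ, hfin, hψQ, hclose⟩ :=
      hreg₁ (fun y => if y = x then (1:ℝ) else 0) hsupp (1/2) (by norm_num)
    set C : ℝ → ℝ := fun t => min (max (t - 1/2) 0) 1 with hC
    have hC0 : C 0 = 0 := by norm_num [hC]
    have hClip : ∀ s t, |C s - C t| ≤ |s - t| := by
      intro s t
      calc |C s - C t| ≤ max |max (s - 1/2) 0 - max (t - 1/2) 0| |(1:ℝ) - 1| :=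
            abs_min_sub_min_le_max _ _ _ _
        _ ≤ max |(s - 1/2) - (t - 1/2)| |s - t| := by
            apply max_le_max
            · calc |max (s - 1/2) 0 - max (t - 1/2) 0|
                  ≤ max |(s - 1/2) - (t - 1/2)| |(0:ℝ) - 0| := abs_max_sub_max_le_max _ _ _ _
                _ ≤ |(s - 1/2) - (t - 1/2)| := by simp
            · simp [abs_nonneg]
        _ = |s - t| := by rw [show s - 1/2 - (t - 1/2) = s - t by ring, max_self]
    have hQCψ : Q (fun y => C (ψ y)) ≤ Q ψ := hmarkov C hC0 hClip ψ
    -- ψ x > 1/2 and |ψ y| < 1/2 for y ≠ x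
    have hψx : ψ x > 1/2 := by
      have h := hclose x
      rw [if_pos rfl] at h
      have h2 := (abs_lt.mp h).1
      linarith
    set c : ℝ := min (ψ x - 1/2) 1 with hc
    have hcpos : 0 < c := lt_min (by linarith) one_pos
    have heq : (fun y => C (ψ y)) = c • (fun y => if y = x then (1:ℝ) else 0) := by
      funext y
      by_cases hy : y = x
      · subst hy
        have hCx : C (ψ y) = c := by
          simp only [hC, hc]
          rw [max_eq_left (by linarith)]
        rw [hCx, Pi.smul_apply, if_pos rfl, smul_eq_mul, mul_one]
      · have hy2 := hclose y
        rw [if_neg hy, sub_zero] at hy2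
        have hlt := (abs_lt.mp hy2).2
        have hCy : C (ψ y) = 0 := by
          simp only [hC]
          rw [max_eq_right (by linarith), min_eq_left (by norm_num)]
        rw [hCy, Pi.smul_apply, if_neg hy, smul_eq_mul, mul_zero]
    have hQc : Q (c • (fun y => if y = x then (1:ℝ) else 0)) ≠ ⊤ := by
      rw [← heq]
      exact fun htop => hψQ (top_le_iff.mp (htop ▸ hQCψ))
    have := hsmul c⁻¹ _ hQc
    rwa [smul_smul, inv_mul_cancel₀ (ne_of_gt hcpos), one_smul] at this
  -- Step 2: induction over the (finite) support
  have key : ∀ s : Finset V, ∀ φ : V → ℝ, (∀ y, y ∉ s → φ y = 0) → Q φ ≠ ⊤ := by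
    intro s
    induction s using Finset.induction with
    | empty =>
      intro φ h
      have : φ = 0 := funext fun y => h y (by simp)
      rwa [this]
    | @insert a t ha ih =>
      intro φ h
      have h1 : Q (fun y => φ y - φ a * (if y = a then 1 else 0)) ≠ ⊤ := by
        apply ih
        intro y hy
        by_cases hya : y = a
        · subst hya; simp
        · have : φ y = 0 := h y (by simp [hya, hy])
          simp [hya, this]
      have h2 : Q (φ a • (fun y => if y = a then (1:ℝ) else 0)) ≠ ⊤ := hsmul _ _ (hind a)
      have h3 := hadd _ _ h1 h2
      have heq : ((fun y => φ y - φ a * (if y = a then 1 else 0)) +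
          φ a • (fun y => if y = a then (1:ℝ) else 0)) = φ := by
        funext y
        simp only [Pi.add_apply, Pi.smul_apply, smul_eq_mul]
        ring
      rwa [heq] at h3
  intro φ hfin
  apply key hfin.toFinset
  intro y hy
  by_contra hne
  exact hy (hfin.mem_toFinset.mpr hne)
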